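/- Let A be a finite group acting faithfully and transitively on a finite set Ω, with a normal subgroup G of index n containing a point stabiliser U = A_α. Let Ω_1, …, Ω_n be the G-orbits on Ω with α ∈ Ω_1, and suppose G acts on Ω_1 as a primitive permutation group of affine type (i.e. Soc(G^{Ω_1}) is elementary abelian, regular on Ω_1). If P_A(G) = P_A(U), then |G : U| ≤ n. -/

import Mathlib

open MulAction Subgroup Pointwise

lemma myNcardIUnionLe {α ι : Type*} [Fintype ι] [Finite α] (s : ι → Set α) :
    (⋃ i, s i).ncard ≤ ∑ i, (s i).ncard := by
  classical
  have key : ∀ t : Finset ι, (⋃ i ∈ t, s i).ncard ≤ ∑ i ∈ t, (s i).ncard := by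
    intro t
    induction t using Finset.induction_on with
    | empty => simp
    | insert _ _ h ih =>
      rename_i a t'
      rw [Finset.set_biUnion_insert, Finset.sum_insert h]
      exact le_trans (Set.ncard_union_le _ _) (Nat.add_le_add_left ih _)
  have : (⋃ i, s i) = ⋃ i ∈ (Finset.univ : Finset ι), s i := by simp
  rw [this]
  simpa using key Finset.univ

lemma myConjComm {G : Type*} [Group G] {b h z : G}
    (e : (b⁻¹ * h * b) * z = z * (b⁻¹ * h * b)) :
    h * (b * z * b⁻¹) = (b * z * b⁻¹) * h := by
  calc h * (b * z * b⁻¹) = b * ((b⁻¹ * h * b) * z) * b⁻¹ := by group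
    _ = b * (z * (b⁻¹ * h * b)) * b⁻¹ := by rw [e]
    _ = (b * z * b⁻¹) * h := by group

lemma myOrbitSmul {A Ω : Type*} [Group A] [MulAction A Ω] (W : Subgroup A)
    (hW : W.Normal) (a : A) (x : Ω) :
    MulAction.orbit (↥W) (a • x) = a • MulAction.orbit (↥W) x := by
  ext y
  constructor
  · rintro ⟨⟨w, hw⟩, rfl⟩
    refine ⟨(a⁻¹ * w * a) • x, ⟨⟨a⁻¹ * w * a, by simpa using hW.conj_mem w hw a⁻¹⟩, rfl⟩, ?_⟩
    show a • ((a⁻¹ * w * a) • x) = w • (a • x)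
    rw [smul_smul, smul_smul]
    congr 1
    group
  · rintro ⟨-, ⟨⟨w, hw⟩, rfl⟩, rfl⟩
    refine ⟨⟨a * w * a⁻¹, hW.conj_mem w hw a⟩, ?_⟩
    show (a * w * a⁻¹) • (a • x) = a • (w • x)
    rw [smul_smul, smul_smul]
    congr 1
    group

/-- The `A`-prime-power-covering set of a subgroup `H` of `A`. -/
def ppcSet {A : Type*} [Group A] (H : Subgroup A) : Set A :=
  {y | ∃ x ∈ H, (∃ p k : ℕ, p.Prime ∧ orderOf x = p ^ k) ∧ ∃ a : A, a⁻¹ * x * a = y}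

theorem stmt9 {A Ω : Type*} [Group A] [Finite A] [Finite Ω] [MulAction A Ω]
    [FaithfulSMul A Ω] [MulAction.IsPretransitive A Ω]
    (G : Subgroup A) (hG : G.Normal) (n : ℕ) (hn : G.index = n)
    (α : Ω) (hstab : MulAction.stabilizer A α ≤ G)
    -- `G` acts primitively on its orbit `Ω₁` containing `α` :
    (hprim : ∀ B : Set Ω, B ⊆ MulAction.orbit (↥G) α → MulAction.IsBlock (↥G) B →
      B.Subsingleton ∨ B = MulAction.orbit (↥G) α)
    -- of affine type: the socle of `G^{Ω₁}` is elementary abelian and regular on `Ω₁`,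
    -- witnessed by an elementary abelian subgroup `S` normal in `G`, inducing a
    -- transitive and semiregular permutation group on `Ω₁` :
    (p : ℕ) (hp : p.Prime) (S : Subgroup A) (hSG : S ≤ G)
    (hSnormal : ∀ g ∈ G, ∀ s ∈ S, g * s * g⁻¹ ∈ S)
    (hSab : ∀ x ∈ S, ∀ y ∈ S, x * y = y * x)
    (hSp : ∀ x ∈ S, x ^ p = 1)
    (hStrans : ∀ β ∈ MulAction.orbit (↥G) α, ∀ γ ∈ MulAction.orbit (↥G) α,
      ∃ s ∈ S, s • β = γ)
    (hSreg : ∀ s ∈ S, ∀ β ∈ MulAction.orbit (↥G) α, s • β = β →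
      ∀ γ ∈ MulAction.orbit (↥G) α, s • γ = γ)
    (hppc : ppcSet G = ppcSet (MulAction.stabilizer A α)) :
    (MulAction.stabilizer A α).relIndex G ≤ n := by
  classical
  haveI : Fact p.Prime := ⟨hp⟩
  haveI := hG
  -- n is positive
  have hn0 : 0 < n := by
    rw [← hn]
    exact Nat.pos_of_ne_zero Subgroup.index_ne_zero_of_finite
  -- reduce the goal to a statement about the cardinality of the orbit
  have hrel : (MulAction.stabilizer A α).relIndex G
      = Nat.card ↥(MulAction.orbit (↥G) α) := by
    have hsg : (MulAction.stabilizer A α).subgroupOf G = MulAction.stabilizer (↥G) α := by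
      ext g
      simp only [Subgroup.mem_subgroupOf, MulAction.mem_stabilizer_iff]
      rfl
    rw [Subgroup.relIndex, hsg, MulAction.index_stabilizer, Nat.card_coe_set_eq]
  rw [hrel]
  -- the normal closure N of S in A
  set N : Subgroup A := Subgroup.normalClosure (S : Set A) with hNdef
  haveI hNnorm : N.Normal := Subgroup.normalClosure_normal
  have hNG : N ≤ G := Subgroup.normalClosure_le_normal hSG
  -- S is a p-group
  have hSpg : IsPGroup p ↥S := by
    intro g
    refine ⟨1, ?_⟩
    rw [pow_one]
    exact Subtype.ext (by simpa using hSp ↑g g.2)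
  -- N is a p-group
  obtain ⟨P⟩ : Nonempty (Sylow p ↥G) := inferInstance
  have hNp : IsPGroup p ↥N := by
    have hkey : ∀ a : A, S.map (MulAut.conj a).toMonoidHom ≤ Subgroup.map G.subtype P.1 := by
      intro a
      set Sa := S.map (MulAut.conj a).toMonoidHom with hSadef
      have hSaG : Sa ≤ G := by
        rintro x ⟨s, hs, rfl⟩
        simpa [MulAut.conj_apply] using hG.conj_mem s (hSG hs) a
      have hSap : IsPGroup p ↥Sa := hSpg.map _
      set T := Sa.subgroupOf G with hTdef
      haveI hTn : T.Normal := by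
        constructor
        rintro ⟨x, hxG⟩ hx ⟨g, hgG⟩
        simp only [hTdef, Subgroup.mem_subgroupOf] at hx ⊢
        rw [Subgroup.mem_map] at hx ⊢
        obtain ⟨s, hs, hxs⟩ := hx
        simp only [MulEquiv.coe_toMonoidHom, MulAut.conj_apply] at hxs
        refine ⟨(a⁻¹ * g * a) * s * (a⁻¹ * g * a)⁻¹,
          hSnormal _ (by simpa using hG.conj_mem g hgG a⁻¹) s hs, ?_⟩
        simp only [MulEquiv.coe_toMonoidHom, MulAut.conj_apply]
        show a * ((a⁻¹ * g * a) * s * (a⁻¹ * g * a)⁻¹) * a⁻¹ = g * x * g⁻¹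
        rw [← hxs]
        group
      have hTp : IsPGroup p ↥T := hSap.of_equiv (Subgroup.subgroupOfEquivOfLe hSaG).symm
      have hsup : IsPGroup p ↥(T ⊔ P.1) := IsPGroup.to_sup_of_normal_left hTp P.isPGroup'
      have hTP : T ≤ P.1 := by
        have heq : T ⊔ P.1 = P.1 := P.is_maximal' hsup le_sup_right
        exact le_trans le_sup_left heq.le
      intro x hx
      exact ⟨⟨x, hSaG hx⟩, hTP (by simpa [hTdef, Subgroup.mem_subgroupOf] using hx), rfl⟩
    have hNle : N ≤ Subgroup.map G.subtype P.1 := by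
      refine (Subgroup.closure_le _).2 ?_
      intro x hx
      rw [Group.mem_conjugatesOfSet_iff] at hx
      obtain ⟨s, hs, hconj⟩ := hx
      rw [isConj_iff] at hconj
      obtain ⟨c, hc⟩ := hconj
      have hmem : x ∈ S.map (MulAut.conj c).toMonoidHom := by
        rw [Subgroup.mem_map]
        refine ⟨s, hs, ?_⟩
        simp only [MulEquiv.coe_toMonoidHom, MulAut.conj_apply]
        exact hc
      exact hkey c hmem
    exact (P.isPGroup'.map G.subtype).to_le hNle
  -- Z : the centre of N, as a subgroup of A
  set Z : Subgroup A := Subgroup.centralizer (N : Set A) ⊓ N with hZdef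
  have hZN : Z ≤ N := inf_le_right
  have hZG : Z ≤ G := le_trans hZN hNG
  have hZnormal : Z.Normal := by
    constructor
    intro z hz b
    obtain ⟨hzc, hzN⟩ := Subgroup.mem_inf.mp hz
    refine Subgroup.mem_inf.mpr ⟨?_, hNnorm.conj_mem z hzN b⟩
    rw [Subgroup.mem_centralizer_iff]
    intro h hh
    have hh' : b⁻¹ * h * b ∈ N := by
      simpa using hNnorm.conj_mem h hh b⁻¹
    exact myConjComm (Subgroup.mem_centralizer_iff.1 hzc _ hh')
  have hZab : ∀ x ∈ Z, ∀ y ∈ Z, x * y = y * x := by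
    intro x hx y hy
    exact (Subgroup.mem_centralizer_iff.1 (Subgroup.mem_inf.mp hx).1 y
      (Subgroup.mem_inf.mp hy).2).symm
  -- every element of Z has a fixed point on Ω
  have hZfix : ∀ z ∈ Z, ∃ β : Ω, z • β = β := by
    intro z hz
    have hzN : z ∈ N := hZN hz
    obtain ⟨k, hk⟩ := IsPGroup.iff_orderOf.mp hNp ⟨z, hzN⟩
    have hzord : orderOf z = p ^ k := by
      rw [← hk]
      exact orderOf_injective N.subtype Subtype.coe_injective ⟨z, hzN⟩
    have hzmem : z ∈ ppcSet G := ⟨z, hZG hz, ⟨p, k, hp, hzord⟩, 1, by group⟩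
    rw [hppc] at hzmem
    obtain ⟨x, hxst, -, a, hconj⟩ := hzmem
    refine ⟨a⁻¹ • α, ?_⟩
    have hxα : x • α = α := hxst
    rw [smul_smul]
    have : z * a⁻¹ = a⁻¹ * x := by rw [← hconj]; group
    rw [this, ← smul_smul, hxα]
  -- the orbit of α under Z, a block
  set B : Set Ω := MulAction.orbit (↥Z) α with hBdef
  have hBsub : B ⊆ MulAction.orbit (↥G) α := by
    rintro y ⟨⟨z, hz⟩, rfl⟩
    exact ⟨⟨z, hZG hz⟩, rfl⟩
  have hBblock : MulAction.IsBlock (↥G) B := by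
    haveI : (Z.subgroupOf G).Normal := by
      constructor
      rintro ⟨x, hxG⟩ hx ⟨g, hgG⟩
      simp only [Subgroup.mem_subgroupOf] at hx ⊢
      exact hZnormal.conj_mem x hx g
    have hBeq : B = MulAction.orbit (↥(Z.subgroupOf G)) α := by
      ext y
      constructor
      · rintro ⟨⟨z, hz⟩, rfl⟩
        exact ⟨⟨⟨z, hZG hz⟩, hz⟩, rfl⟩
      · rintro ⟨⟨⟨z, hzG⟩, hz⟩, rfl⟩
        exact ⟨⟨z, hz⟩, rfl⟩
    rw [hBeq]
    exact MulAction.IsBlock.orbit_of_normal α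
  rcases hprim B hBsub hBblock with hsing | hfull
  · -- degenerate case : Z acts trivially, S = ⊥, the orbit is {α}
    have hZtriv : ∀ z ∈ Z, ∀ β : Ω, z • β = β := by
      intro z hz β
      obtain ⟨a, ha⟩ := MulAction.exists_smul_eq A β α
      have hβ : β = a⁻¹ • α := by rw [← ha, inv_smul_smul]
      have horb : MulAction.orbit (↥Z) β = a⁻¹ • B := by
        rw [hβ]; exact myOrbitSmul Z hZnormal a⁻¹ α
      have hsub2 : (MulAction.orbit (↥Z) β).Subsingleton := by
        rw [horb]
        have := hsing.image (fun x : Ω => a⁻¹ • x)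
        rwa [Set.image_smul] at this
      have h1 : z • β ∈ MulAction.orbit (↥Z) β := ⟨⟨z, hz⟩, rfl⟩
      exact hsub2 h1 (MulAction.mem_orbit_self β)
    have hZbot : ∀ z ∈ Z, z = (1 : A) := by
      intro z hz
      refine eq_of_smul_eq_smul (α := Ω) (fun β => ?_)
      rw [one_smul]
      exact hZtriv z hz β
    have hNbot : N = ⊥ := by
      rcases N.bot_or_nontrivial with h | h
      · exact h
      · exfalso
        haveI := h
        haveI : Nontrivial (Subgroup.center ↥N) := hNp.center_nontrivial
        obtain ⟨c, hc⟩ := exists_ne (1 : Subgroup.center ↥N)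
        have hcZ : ((c : ↥N) : A) ∈ Z := by
          refine Subgroup.mem_inf.mpr ⟨?_, (c : ↥N).2⟩
          rw [Subgroup.mem_centralizer_iff]
          intro h' hh'
          have := (Subgroup.mem_center_iff.mp c.2) ⟨h', hh'⟩
          exact congrArg Subtype.val this
        have : ((c : ↥N) : A) = 1 := hZbot _ hcZ
        exact hc (Subtype.ext (Subtype.ext this))
    have hSbot : ∀ s ∈ S, s = (1 : A) := by
      intro s hs
      have : s ∈ N := Subgroup.subset_normalClosure hs
      rw [hNbot] at this
      simpa using this
    have horbeq : MulAction.orbit (↥G) α = {α} := by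
      apply Set.eq_singleton_iff_unique_mem.mpr
      refine ⟨MulAction.mem_orbit_self α, ?_⟩
      intro β hβ
      obtain ⟨s, hs, hsβ⟩ := hStrans β hβ α (MulAction.mem_orbit_self α)
      rw [hSbot s hs, one_smul] at hsβ
      exact hsβ
    rw [horbeq]
    simpa using (show 1 ≤ n from hn0)
  · -- main case : Z is transitive on each orbit of G
    have horbeq : ∀ β : Ω, MulAction.orbit (↥Z) β = MulAction.orbit (↥G) β := by
      intro β
      obtain ⟨a, ha⟩ := MulAction.exists_smul_eq A β α
      have hβ : β = a⁻¹ • α := by rw [← ha, inv_smul_smul]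
      rw [hβ, myOrbitSmul Z hZnormal, myOrbitSmul G hG, ← hBdef, hfull]
    set m := Nat.card ↥(MulAction.orbit (↥G) α) with hmdef
    have hcard_orbitG : ∀ β : Ω, Nat.card ↥(MulAction.orbit (↥G) β) = m := by
      intro β
      obtain ⟨a, ha⟩ := MulAction.exists_smul_eq A α β
      rw [← ha, myOrbitSmul G hG a α]
      calc Nat.card ↥(a • MulAction.orbit (↥G) α)
          = (a • MulAction.orbit (↥G) α).ncard := Nat.card_coe_set_eq _
        _ = (MulAction.orbit (↥G) α).ncard := by
            rw [← Set.image_smul]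
            exact Set.ncard_image_of_injective _ (MulAction.injective a)
        _ = m := (Nat.card_coe_set_eq _).symm
    -- the points indexed by cosets
    set xq : A ⧸ G → Ω := fun q => q.out • α with hxqdef
    have hstabcard : ∀ q : A ⧸ G,
        m * Nat.card ↥(MulAction.stabilizer (↥Z) (xq q)) = Nat.card ↥Z := by
      intro q
      have h1 : (MulAction.stabilizer (↥Z) (xq q)).index = m := by
        rw [MulAction.index_stabilizer, ← Nat.card_coe_set_eq, horbeq, hcard_orbitG]
      rw [← h1, mul_comm]
      exact Subgroup.card_mul_index _
    -- covering of Z by the stabilizers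
    have hcov : ∀ z : ↥Z, ∃ q : A ⧸ G, z ∈ MulAction.stabilizer (↥Z) (xq q) := by
      intro z
      obtain ⟨β, hβfix⟩ := hZfix ↑z z.2
      obtain ⟨a, ha⟩ := MulAction.exists_smul_eq A β α
      refine ⟨QuotientGroup.mk a⁻¹, ?_⟩
      set b := (QuotientGroup.mk (s := G) a⁻¹ : A ⧸ G).out with hb
      have hab : a * b ∈ G := by
        have heq : (QuotientGroup.mk a⁻¹ : A ⧸ G) = QuotientGroup.mk b :=
          (QuotientGroup.out_eq' _).symm
        have := QuotientGroup.eq.mp heq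
        simpa using this
      have hx_orb : xq (QuotientGroup.mk a⁻¹) ∈ MulAction.orbit (↥Z) β := by
        rw [horbeq]
        refine ⟨⟨b * a, by simpa [mul_assoc] using hG.conj_mem _ hab a⁻¹⟩, ?_⟩
        show (b * a) • β = xq (QuotientGroup.mk a⁻¹)
        rw [← smul_smul, ha]
      obtain ⟨w, hw⟩ := hx_orb
      rw [MulAction.mem_stabilizer_iff, ← hw]
      have hzw : z * w = w * z := Subtype.ext (hZab _ z.2 _ w.2)
      calc z • (w • β) = (z * w) • β := (mul_smul _ _ _).symm
        _ = (w * z) • β := by rw [hzw]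
        _ = w • (z • β) := mul_smul _ _ _
        _ = w • β := congrArg (fun t => w • t) hβfix
    -- counting
    haveI : Fintype (A ⧸ G) := Fintype.ofFinite _
    have hZpos : 0 < Nat.card ↥Z := Nat.card_pos
    have hcount : Nat.card ↥Z
        ≤ ∑ q : A ⧸ G, Nat.card ↥(MulAction.stabilizer (↥Z) (xq q)) := by
      have hsub : (Set.univ : Set ↥Z)
          ⊆ ⋃ q : A ⧸ G, ((MulAction.stabilizer (↥Z) (xq q) : Subgroup ↥Z) : Set ↥Z) := by
        intro z _
        exact Set.mem_iUnion.2 (hcov z)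
      calc Nat.card ↥Z = (Set.univ : Set ↥Z).ncard := (Set.ncard_univ _).symm
        _ ≤ (⋃ q : A ⧸ G,
              ((MulAction.stabilizer (↥Z) (xq q) : Subgroup ↥Z) : Set ↥Z)).ncard :=
            Set.ncard_le_ncard hsub (Set.toFinite _)
        _ ≤ ∑ q : A ⧸ G,
              ((MulAction.stabilizer (↥Z) (xq q) : Subgroup ↥Z) : Set ↥Z).ncard :=
            myNcardIUnionLe _
        _ = ∑ q : A ⧸ G, Nat.card ↥(MulAction.stabilizer (↥Z) (xq q)) := by
            refine Finset.sum_congr rfl (fun q _ => ?_)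
            rw [← Nat.card_coe_set_eq]
            rfl
    have hfinal : m * Nat.card ↥Z ≤ n * Nat.card ↥Z := by
      calc m * Nat.card ↥Z
          ≤ m * ∑ q : A ⧸ G, Nat.card ↥(MulAction.stabilizer (↥Z) (xq q)) :=
            Nat.mul_le_mul_left m hcount
        _ = ∑ q : A ⧸ G, m * Nat.card ↥(MulAction.stabilizer (↥Z) (xq q)) := by
            rw [Finset.mul_sum]
        _ = ∑ _q : A ⧸ G, Nat.card ↥Z := by
            exact Finset.sum_congr rfl (fun q _ => hstabcard q)
        _ = Fintype.card (A ⧸ G) * Nat.card ↥Z := by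
            rw [Finset.sum_const, Finset.card_univ, smul_eq_mul]
        _ = n * Nat.card ↥Z := by
            have hcardq : Fintype.card (A ⧸ G) = n := by
              rw [← Nat.card_eq_fintype_card, ← hn]
              rfl
            rw [hcardq]
    exact Nat.le_of_mul_le_mul_right (by simpa [mul_comm] using hfinal) hZpos
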